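/- arXiv:0911.3765 — 7 statements merged into one kernel-verified Lean document; each statement's English description precedes it below -/
import Mathlib

section
/- For every nonnegative integer n, the n-th derivative of the secant function at x equals sec(x) * Q_n(tan x), where Q_n is the n-th derivative polynomial for secant. -/
noncomputable def Q : ℕ → Polynomial ℝ
  | 0 => 1
  | n + 1 => (1 + Polynomial.X ^ 2) * Polynomial.derivative (Q n)
      + Polynomial.X * Q n

lemma hasDerivAt_aux (n : ℕ) (x : ℝ) (hx : Real.cos x ≠ 0) :
    HasDerivAt (fun y : ℝ => (1 / Real.cos y) * (Q n).eval (Real.tan y))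
      ((1 / Real.cos x) * (Q (n+1)).eval (Real.tan x)) x := by
  have h1 : HasDerivAt (fun y : ℝ => 1 / Real.cos y)
      (Real.sin x / Real.cos x ^ 2) x := by
    simpa [one_div, div_eq_mul_inv, pow_two] using
      (Real.hasDerivAt_cos x).fun_inv hx
  have h2 : HasDerivAt (fun y : ℝ => (Q n).eval (Real.tan y))
      ((Q n).derivative.eval (Real.tan x) * (1 / Real.cos x ^ 2)) x :=
    ((Q n).hasDerivAt (Real.tan x)).comp x (Real.hasDerivAt_tan hx)
  have h : HasDerivAt (fun y : ℝ => (1 / Real.cos y) * (Q n).eval (Real.tan y)) _ x :=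
    h1.fun_mul h2
  convert h using 1
  show (1 / Real.cos x) * ((1 + Polynomial.X ^ 2) * (Q n).derivative
      + Polynomial.X * Q n).eval (Real.tan x) = _
  simp only [Polynomial.eval_add, Polynomial.eval_mul, Polynomial.eval_one,
    Polynomial.eval_pow, Polynomial.eval_X, Real.tan_eq_sin_div_cos]
  field_simp
  linear_combination (Polynomial.eval (Real.sin x / Real.cos x) (Polynomial.derivative (Q n))) * Real.sin_sq_add_cos_sq x

theorem deriv_sec (n : ℕ) (x : ℝ) (hx : Real.cos x ≠ 0) :
    iteratedDeriv n (fun y : ℝ => 1 / Real.cos y) x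
      = (1 / Real.cos x) * (Q n).eval (Real.tan x) := by
  induction n generalizing x hx with
  | zero => simp [Q]
  | succ n ih =>
    rw [iteratedDeriv_succ]
    have hev : iteratedDeriv n (fun y : ℝ => 1 / Real.cos y) =ᶠ[nhds x]
        fun y => (1 / Real.cos y) * (Q n).eval (Real.tan y) := by
      filter_upwards [(isOpen_compl_singleton.preimage
        Real.continuous_cos).mem_nhds hx] with y hy
      exact ih y hy
    rw [hev.deriv_eq]
    exact (hasDerivAt_aux n x hx).deriv
end

section
/- For every nonnegative integer n, the n-th derivative of the cosecant function at x equals (-1)^n * csc(x) * Q_n(cot x). -/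
noncomputable def F (n : ℕ) (y : ℝ) : ℝ :=
  (-1 : ℝ) ^ n * (1 / Real.sin y) * (Q n).eval (Real.cos y / Real.sin y)

lemma hasDerivAt_F (n : ℕ) (x : ℝ) (hx : Real.sin x ≠ 0) :
    HasDerivAt (F n) (F (n + 1) x) x := by
  have hsin := Real.hasDerivAt_sin x
  have hcos := Real.hasDerivAt_cos x
  have hpyth : -Real.sin x * Real.sin x - Real.cos x * Real.cos x = -1 := by
    nlinarith [Real.sin_sq_add_cos_sq x]
  have h1 : HasDerivAt (fun y : ℝ => 1 / Real.sin y)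
      (-Real.cos x / Real.sin x ^ 2) x := by
    have := hsin.inv hx
    simp only [one_div]
    exact this
  have hcot : HasDerivAt (fun y => Real.cos y / Real.sin y)
      ((-Real.sin x * Real.sin x - Real.cos x * Real.cos x) / Real.sin x ^ 2) x :=
    hcos.div hsin hx
  rw [hpyth] at hcot
  have hP : HasDerivAt (fun y => (Q n).eval (Real.cos y / Real.sin y))
      ((Polynomial.derivative (Q n)).eval (Real.cos x / Real.sin x) *
        ((-1 : ℝ) / Real.sin x ^ 2)) x :=
    (Polynomial.hasDerivAt (Q n) _).comp x hcot
  have h2 := (h1.mul hP).const_mul ((-1 : ℝ) ^ n)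
  have hF : F n = fun y => (-1 : ℝ) ^ n *
      (1 / Real.sin y * (Q n).eval (Real.cos y / Real.sin y)) := by
    funext y; simp [F, mul_assoc]
  rw [hF]
  convert h2 using 1
  show (-1 : ℝ) ^ (n + 1) * (1 / Real.sin x) *
      ((1 + Polynomial.X ^ 2) * Polynomial.derivative (Q n)
        + Polynomial.X * Q n).eval (Real.cos x / Real.sin x) = _
  simp only [Polynomial.eval_add, Polynomial.eval_mul, Polynomial.eval_one,
    Polynomial.eval_pow, Polynomial.eval_X, pow_succ]
  field_simp
  linear_combination (-(
      Polynomial.eval (Real.cos x / Real.sin x) (Polynomial.derivative (Q n)))) * Real.sin_sq_add_cos_sq x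
  all_goals rfl

theorem deriv_csc (n : ℕ) (x : ℝ) (hx : Real.sin x ≠ 0) :
    iteratedDeriv n (fun y : ℝ => 1 / Real.sin y) x
      = (-1 : ℝ) ^ n * (1 / Real.sin x)
        * (Q n).eval (Real.cos x / Real.sin x) := by
  induction n generalizing x hx with
  | zero => simp [Q]
  | succ n ih =>
    rw [iteratedDeriv_succ]
    have hopen : IsOpen {y : ℝ | Real.sin y ≠ 0} :=
      isOpen_compl_singleton.preimage Real.continuous_sin
    have hev : iteratedDeriv n (fun y : ℝ => 1 / Real.sin y) =ᶠ[nhds x] F n := by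
      filter_upwards [hopen.mem_nhds hx] with y hy
      exact ih y hy
    rw [hev.deriv_eq, (hasDerivAt_F n x hx).deriv]
    rfl
end

section
/- For every nonnegative integer n, Q_n(x) = Σ_{k=0}^{n} S(n,k) x^k, where S(n,k) are the secant numbers of order k. -/
noncomputable def S (n k : ℕ) : ℝ :=
  iteratedDeriv n (fun t : ℝ => (1 / Real.cos t) * Real.tan t ^ k) 0

open Polynomial Real Set

noncomputable def Lop : Module.End ℝ (Polynomial ℝ) where
  toFun p := (1 + X ^ 2) * derivative p + X * p
  map_add' p q := by simp [mul_add]; ring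
  map_smul' c p := by simp [smul_add, mul_smul_comm]

lemma Lop_apply (p : Polynomial ℝ) : Lop p = (1 + X ^ 2) * derivative p + X * p := rfl

lemma coeff_Lop (p : Polynomial ℝ) (j : ℕ) :
    (Lop p).coeff j = ((j : ℝ) + 1) * p.coeff (j + 1) + (j : ℝ) * p.coeff (j - 1) := by
  have h2 : (X ^ 2 * derivative p : Polynomial ℝ) = derivative p * X ^ 2 := by ring
  have h1 : (X * p : Polynomial ℝ) = p * X ^ 1 := by ring
  rw [Lop_apply, add_mul, one_mul, h2, h1]
  rcases j with _ | _ | j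
  · simp [coeff_derivative, coeff_mul_X_pow']
  · simp [coeff_derivative, coeff_mul_X_pow']; ring
  · simp [coeff_derivative, coeff_mul_X_pow', Nat.succ_sub_succ]; ring

lemma Lop_X_pow (j : ℕ) :
    Lop (X ^ j : Polynomial ℝ) = (j : ℝ) • X ^ (j - 1) + ((j : ℝ) + 1) • X ^ (j + 1) := by
  rcases j with _ | j
  · simp [Lop_apply]
  · rw [Lop_apply, derivative_X_pow]
    simp [smul_eq_C_mul]
    ring

lemma symm_coeff (n : ℕ) : ∀ j k : ℕ,
    ((Lop ^ n) (X ^ k : Polynomial ℝ)).coeff j = ((Lop ^ n) (X ^ j : Polynomial ℝ)).coeff k := by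
  induction n with
  | zero => intro j k; simp [coeff_X_pow, eq_comm]
  | succ n ih =>
    intro j k
    have h1 : ((Lop ^ (n + 1)) (X ^ k : Polynomial ℝ)).coeff j
        = ((j : ℝ) + 1) * ((Lop ^ n) (X ^ k : Polynomial ℝ)).coeff (j + 1)
          + (j : ℝ) * ((Lop ^ n) (X ^ k : Polynomial ℝ)).coeff (j - 1) := by
      rw [pow_succ', Module.End.mul_apply, coeff_Lop]
    rw [h1, ih (j + 1) k, ih (j - 1) k]
    rw [show Lop^(n+1) = Lop^n * Lop from pow_succ Lop n, Module.End.mul_apply, Lop_X_pow, map_add, map_smul, map_smul,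
      coeff_add, coeff_smul, coeff_smul]
    rcases j with _ | j
    · simp
    · simp [Nat.succ_sub_one, smul_eq_mul]
      ring

lemma hasDerivAt_aux_s12 (p : Polynomial ℝ) (t : ℝ) (h : Real.cos t ≠ 0) :
    HasDerivAt (fun s => (Real.cos s)⁻¹ * p.eval (Real.tan s))
      ((Real.cos t)⁻¹ * (Lop p).eval (Real.tan t)) t := by
  have h1 : HasDerivAt (fun s => (Real.cos s)⁻¹)
      (Real.sin t / Real.cos t ^ 2) t := by
    have := (Real.hasDerivAt_cos t).inv h
    refine this.congr_deriv ?_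
    ring
  have h2 : HasDerivAt (fun s => p.eval (Real.tan s))
      (p.derivative.eval (Real.tan t) * (1 / Real.cos t ^ 2)) t :=
    (p.hasDerivAt (Real.tan t)).comp t (Real.hasDerivAt_tan h)
  refine (h1.mul h2).congr_deriv ?_
  rw [Lop_apply]
  simp only [eval_add, eval_mul, eval_one, eval_pow, eval_X, Real.tan_eq_sin_div_cos]
  field_simp
  rw [div_eq_mul_inv]
  generalize eval (Real.sin t * (Real.cos t)⁻¹) (derivative p) = D
  linear_combination (-D) * Real.sin_sq_add_cos_sq t

lemma iteratedDeriv_eq (k n : ℕ) : ∀ t ∈ Ioo (-(π/2)) (π/2),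
    iteratedDeriv n (fun t : ℝ => (1 / Real.cos t) * Real.tan t ^ k) t
      = (Real.cos t)⁻¹ * ((Lop ^ n) (X ^ k : Polynomial ℝ)).eval (Real.tan t) := by
  induction n with
  | zero => intro t _; simp [one_div]
  | succ n ih =>
    intro t ht
    have hcos : Real.cos t ≠ 0 := (Real.cos_pos_of_mem_Ioo ht).ne'
    have heq : iteratedDeriv n (fun t : ℝ => (1 / Real.cos t) * Real.tan t ^ k)
        =ᶠ[nhds t] fun s => (Real.cos s)⁻¹ * ((Lop ^ n) (X ^ k : Polynomial ℝ)).eval (Real.tan s) := by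
      filter_upwards [isOpen_Ioo.mem_nhds ht] with s hs using ih s hs
    rw [iteratedDeriv_succ, heq.deriv_eq,
      (hasDerivAt_aux_s12 _ t hcos).deriv,
      ← Module.End.mul_apply, ← pow_succ']

lemma Q_eq_pow (n : ℕ) : Q n = (Lop ^ n) (1 : Polynomial ℝ) := by
  induction n with
  | zero => simp [Q]
  | succ n ih =>
    rw [show Q (n+1) = Lop (Q n) from rfl, ih, ← Module.End.mul_apply, ← pow_succ']

lemma natDegree_Lop_le (p : Polynomial ℝ) : (Lop p).natDegree ≤ p.natDegree + 1 := by
  rw [Lop_apply]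
  refine le_trans (natDegree_add_le _ _) (max_le ?_ ?_)
  · rcases eq_or_ne (derivative p) 0 with hd | hd
    · simp [hd]
    · have h1 : p.natDegree ≠ 0 := by
        intro h0
        obtain ⟨a, ha⟩ := natDegree_eq_zero.mp h0
        rw [← ha] at hd; simp at hd
      refine le_trans (natDegree_mul_le) ?_
      have : ((1 : Polynomial ℝ) + X ^ 2).natDegree ≤ 2 :=
        le_trans (natDegree_add_le _ _) (by simp)
      have := natDegree_derivative_le p
      omega
  · refine le_trans (natDegree_mul_le) ?_
    simp [add_comm]

lemma natDegree_Q_le (n : ℕ) : (Q n).natDegree ≤ n := by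
  induction n with
  | zero => simp [Q]
  | succ n ih =>
    have : Q (n+1) = Lop (Q n) := rfl
    rw [this]
    exact le_trans (natDegree_Lop_le _) (by omega)

lemma S_eq (n k : ℕ) : S n k = ((Lop ^ n) (X ^ k : Polynomial ℝ)).coeff 0 := by
  have h0 : (0 : ℝ) ∈ Ioo (-(π/2)) (π/2) := by
    constructor <;> [linarith [Real.pi_pos]; linarith [Real.pi_pos]]
  rw [S, iteratedDeriv_eq k n 0 h0]
  simp [coeff_zero_eq_eval_zero]

theorem Q_eq_secant_numbers (n : ℕ) (x : ℝ) :
    (Q n).eval x = ∑ k ∈ Finset.range (n + 1), S n k * x ^ k := by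
  rw [eval_eq_sum_range' (Nat.lt_succ_of_le (natDegree_Q_le n))]
  refine Finset.sum_congr rfl fun k _ => ?_
  congr 1
  rw [S_eq, symm_coeff n 0 k, Q_eq_pow]
  simp
end

section
/- For every nonnegative integer n and real x with cos x ≠ 0, the n-th derivative of tan at x equals T(n,1) + Σ_{k=1}^{n+1} (1/k) T(n+1,k) tan^k(x). -/
noncomputable def T (n k : ℕ) : ℝ :=
  iteratedDeriv n (fun t : ℝ => Real.tan t ^ k) 0

namespace TanAux

open Real Filter Topology Finset

def S : Set ℝ := {x : ℝ | Real.cos x ≠ 0}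

lemma isOpen_S : IsOpen S :=
  isOpen_compl_singleton.preimage Real.continuous_cos

lemma zero_mem_S : (0 : ℝ) ∈ S := by
  simp [S]

lemma contDiffOn_tan_pow (m : ℕ) (n : ℕ) :
    ContDiffOn ℝ n (fun t : ℝ => Real.tan t ^ m) S :=
  fun x hx => ((Real.contDiffAt_tan.mpr hx).pow m).contDiffWithinAt

lemma itDW_eq (n : ℕ) (f : ℝ → ℝ) {x : ℝ} (hx : x ∈ S) :
    iteratedDerivWithin n f S x = iteratedDeriv n f x := by
  rw [iteratedDerivWithin, iteratedDeriv, iteratedFDerivWithin_of_isOpen n isOpen_S hx]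

lemma comb (n : ℕ) (a b : ℝ) (p q : ℕ) {x : ℝ} (hx : Real.cos x ≠ 0) :
    iteratedDeriv n (fun t : ℝ => a * Real.tan t ^ p + b * Real.tan t ^ q) x
      = a * iteratedDeriv n (fun t : ℝ => Real.tan t ^ p) x
        + b * iteratedDeriv n (fun t : ℝ => Real.tan t ^ q) x := by
  have hx' : x ∈ S := hx
  have hu : UniqueDiffOn ℝ S := isOpen_S.uniqueDiffOn
  have h1 : ContDiffOn ℝ n (fun t : ℝ => a * Real.tan t ^ p) S :=
    (contDiffOn_tan_pow p n).const_smul a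
  have h2 : ContDiffOn ℝ n (fun t : ℝ => b * Real.tan t ^ q) S :=
    (contDiffOn_tan_pow q n).const_smul b
  rw [← itDW_eq n _ hx', ← itDW_eq n _ hx', ← itDW_eq n _ hx']
  have : (fun t : ℝ => a * Real.tan t ^ p + b * Real.tan t ^ q)
      = (fun t : ℝ => a * Real.tan t ^ p) + fun t : ℝ => b * Real.tan t ^ q := rfl
  rw [this, iteratedDerivWithin_add hx' hu (h1 x hx') (h2 x hx'),
    iteratedDerivWithin_const_mul hx' hu a (contDiffOn_tan_pow p n x hx'),
    iteratedDerivWithin_const_mul hx' hu b (contDiffOn_tan_pow q n x hx')]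

lemma hasDerivAt_tan_pow (m : ℕ) {y : ℝ} (hy : Real.cos y ≠ 0) :
    HasDerivAt (fun t : ℝ => Real.tan t ^ (m + 1))
      (((m : ℝ) + 1) * Real.tan y ^ m + ((m : ℝ) + 1) * Real.tan y ^ (m + 2)) y := by
  have h := (Real.hasDerivAt_tan hy).pow (m + 1)
  have h1 : 1 / Real.cos y ^ 2 = 1 + Real.tan y ^ 2 := by
    rw [Real.tan_eq_sin_div_cos]
    field_simp
    exact (Real.cos_sq_add_sin_sq y).symm
  simp only [Nat.add_sub_cancel, h1] at h
  have he : ((m : ℝ) + 1) * Real.tan y ^ m + ((m : ℝ) + 1) * Real.tan y ^ (m + 2)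
      = ((m + 1 : ℕ) : ℝ) * Real.tan y ^ m * (1 + Real.tan y ^ 2) := by
    push_cast
    ring
  rw [he]
  exact h

lemma T_succ (n m : ℕ) :
    T (n + 1) (m + 1) = ((m : ℝ) + 1) * T n m + ((m : ℝ) + 1) * T n (m + 2) := by
  have hev : deriv (fun t : ℝ => Real.tan t ^ (m + 1)) =ᶠ[𝓝 (0 : ℝ)]
      fun t : ℝ => ((m : ℝ) + 1) * Real.tan t ^ m + ((m : ℝ) + 1) * Real.tan t ^ (m + 2) := by
    filter_upwards [isOpen_S.mem_nhds zero_mem_S] with y hy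
    exact (hasDerivAt_tan_pow m hy).deriv
  have h0 : Real.cos 0 ≠ 0 := zero_mem_S
  rw [T, iteratedDeriv_succ', hev.iteratedDeriv_eq n, comb n _ _ _ _ h0]
  rfl

lemma iteratedDeriv_zero_fun (n : ℕ) (x : ℝ) :
    iteratedDeriv n (fun _ : ℝ => (0 : ℝ)) x = 0 := by
  induction n generalizing x with
  | zero => simp
  | succ n IH =>
    rw [iteratedDeriv_succ', deriv_const']
    exact IH x

lemma T_zero (n : ℕ) : T (n + 1) 0 = 0 := by
  have h : (fun t : ℝ => Real.tan t ^ 0) = fun _ : ℝ => (1 : ℝ) := by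
    funext t; simp
  rw [T, h, iteratedDeriv_succ', deriv_const']
  exact iteratedDeriv_zero_fun n 0

lemma rep (n : ℕ) : ∀ k : ℕ, ∃ c : ℕ → ℝ, ∀ x : ℝ, Real.cos x ≠ 0 →
    iteratedDeriv n (fun t : ℝ => Real.tan t ^ (k + n)) x
      = ∑ j ∈ Finset.range (2 * n + 1), c j * Real.tan x ^ (k + j) := by
  induction n with
  | zero =>
    intro k
    exact ⟨fun _ => 1, fun x hx => by simp⟩
  | succ n IH =>
    intro k
    obtain ⟨c, hc⟩ := IH (k + 1)
    set d : ℕ → ℝ := fun j => ((k + 1 + j : ℕ) : ℝ) * c j with hd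
    refine ⟨fun j => (if j < 2 * n + 1 then d j else 0) + (if 2 ≤ j then d (j - 2) else 0),
      fun x hx => ?_⟩
    have hev : iteratedDeriv n (fun t : ℝ => Real.tan t ^ (k + 1 + n)) =ᶠ[𝓝 x]
        fun y : ℝ => ∑ j ∈ Finset.range (2 * n + 1), c j * Real.tan y ^ (k + 1 + j) := by
      filter_upwards [isOpen_S.mem_nhds hx] with y hy using hc y hy
    have hD : HasDerivAt
        (fun y : ℝ => ∑ j ∈ Finset.range (2 * n + 1), c j * Real.tan y ^ (k + 1 + j))
        (∑ j ∈ Finset.range (2 * n + 1),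
          (d j * Real.tan x ^ (k + j) + d j * Real.tan x ^ (k + j + 2))) x := by
      apply HasDerivAt.fun_sum
      intro j hj
      have h := (hasDerivAt_tan_pow (k + j) hx).const_mul (c j)
      have he : k + 1 + j = k + j + 1 := by omega
      rw [he]
      convert h using 1
      · rfl
      simp only [hd]
      push_cast [he]
      ring
    have hstep : iteratedDeriv (n + 1) (fun t : ℝ => Real.tan t ^ (k + (n + 1))) x
        = ∑ j ∈ Finset.range (2 * n + 1),
            (d j * Real.tan x ^ (k + j) + d j * Real.tan x ^ (k + j + 2)) := by
      rw [show k + (n + 1) = k + 1 + n by omega, iteratedDeriv_succ, hev.deriv_eq, hD.deriv]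
    rw [hstep, Finset.sum_add_distrib]
    have e1 : ∑ j ∈ Finset.range (2 * n + 1), d j * Real.tan x ^ (k + j)
        = ∑ j ∈ Finset.range (2 * n + 3),
            (if j < 2 * n + 1 then d j else 0) * Real.tan x ^ (k + j) := by
      have step1 : ∑ j ∈ Finset.range (2 * n + 1), d j * Real.tan x ^ (k + j)
          = ∑ j ∈ Finset.range (2 * n + 1),
              (if j < 2 * n + 1 then d j else 0) * Real.tan x ^ (k + j) :=
        Finset.sum_congr rfl (fun j hj => by rw [if_pos (Finset.mem_range.mp hj)])
      rw [step1]
      exact Finset.sum_subset (Finset.range_subset_range.mpr (by omega))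
        (fun j _ hj => by rw [if_neg (fun h => hj (Finset.mem_range.mpr h)), zero_mul])
    have e2 : ∑ j ∈ Finset.range (2 * n + 1), d j * Real.tan x ^ (k + j + 2)
        = ∑ j ∈ Finset.range (2 * n + 3),
            (if 2 ≤ j then d (j - 2) else 0) * Real.tan x ^ (k + j) := by
      symm
      rw [show 2 * n + 3 = (2 * n + 2) + 1 by omega, Finset.sum_range_succ',
        Finset.sum_range_succ']
      have h0 : (if 2 ≤ 0 then d (0 - 2) else 0) * Real.tan x ^ (k + 0) = 0 := by
        rw [if_neg (by omega), zero_mul]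
      have h1 : (if 2 ≤ 0 + 1 then d (0 + 1 - 2) else 0) * Real.tan x ^ (k + (0 + 1)) = 0 := by
        rw [if_neg (by omega), zero_mul]
      rw [h0, h1, add_zero, add_zero]
      apply Finset.sum_congr rfl
      intro j _
      rw [if_pos (by omega : 2 ≤ j + 1 + 1)]
      have : j + 1 + 1 - 2 = j := by omega
      rw [this, show k + (j + 1 + 1) = k + j + 2 by omega]
    rw [e1, e2, ← Finset.sum_add_distrib]
    apply Finset.sum_congr rfl
    intro j _
    ring

lemma T_vanish {n k : ℕ} (h : n < k) : T n k = 0 := by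
  obtain ⟨c, hc⟩ := rep n (k - n)
  have h0 : Real.cos 0 ≠ 0 := zero_mem_S
  have := hc 0 h0
  rw [show k - n + n = k by omega] at this
  rw [T, this]
  apply Finset.sum_eq_zero
  intro j _
  rw [Real.tan_zero, zero_pow (by omega), mul_zero]

lemma icc_sum (m : ℕ) (f : ℕ → ℝ) :
    ∑ k ∈ Finset.Icc 1 (m + 1), f k = ∑ i ∈ Finset.range (m + 1), f (i + 1) := by
  rw [← Finset.Ico_add_one_right_eq_Icc, Finset.sum_Ico_eq_sum_range]
  simp only [Nat.succ_sub_one, Nat.add_sub_cancel]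
  apply Finset.sum_congr rfl
  intro i _
  rw [add_comm]

lemma main (n : ℕ) : ∀ x : ℝ, Real.cos x ≠ 0 →
    iteratedDeriv n Real.tan x
      = T n 1 + ∑ k ∈ Finset.Icc 1 (n + 1),
          (1 / (k : ℝ)) * T (n + 1) k * Real.tan x ^ k := by
  induction n with
  | zero =>
    intro x hx
    have hT01 : T 0 1 = 0 := by simp [T]
    have hT11 : T 1 1 = 1 := by
      have h : (fun t : ℝ => Real.tan t ^ 1) = Real.tan := by funext t; simp
      rw [T, h, iteratedDeriv_one, Real.deriv_tan]
      simp
    simp [hT01, hT11]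
  | succ n IH =>
    intro x hx
    have hev : iteratedDeriv n Real.tan =ᶠ[𝓝 x]
        fun y : ℝ => T n 1 + ∑ i ∈ Finset.range (n + 1),
          (1 / ((i : ℝ) + 1)) * T (n + 1) (i + 1) * Real.tan y ^ (i + 1) := by
      filter_upwards [isOpen_S.mem_nhds hx] with y hy
      rw [IH y hy, icc_sum n]
      push_cast
      rfl
    set g : ℕ → ℝ := fun i => T (n + 1) i with hg
    have hD : HasDerivAt
        (fun y : ℝ => T n 1 + ∑ i ∈ Finset.range (n + 1),
          (1 / ((i : ℝ) + 1)) * T (n + 1) (i + 1) * Real.tan y ^ (i + 1))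
        (∑ i ∈ Finset.range (n + 1),
          (g (i + 1) * Real.tan x ^ i + g (i + 1) * Real.tan x ^ (i + 2))) x := by
      apply HasDerivAt.const_add
      apply HasDerivAt.fun_sum
      intro i _
      have h := (hasDerivAt_tan_pow i hx).const_mul ((1 / ((i : ℝ) + 1)) * T (n + 1) (i + 1))
      convert h using 1
      · rfl
      have hne : ((i : ℝ) + 1) ≠ 0 := by positivity
      field_simp [hg]
      ring
    rw [iteratedDeriv_succ, hev.deriv_eq, hD.deriv, icc_sum (n + 1)]
    have hTs : ∀ i : ℕ, (1 / ((i : ℝ) + 1)) * T (n + 2) (i + 1) = g i + g (i + 2) := by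
      intro i
      have hne : ((i : ℝ) + 1) ≠ 0 := by positivity
      rw [show n + 2 = (n + 1) + 1 by rfl, T_succ (n + 1) i, hg]
      field_simp
    have hR : ∑ i ∈ Finset.range (n + 2),
          (1 / ((i + 1 : ℕ) : ℝ)) * T (n + 1 + 1) (i + 1) * Real.tan x ^ (i + 1)
        = ∑ i ∈ Finset.range (n + 2),
          ((g i + g (i + 2)) * Real.tan x ^ (i + 1)) := by
      apply Finset.sum_congr rfl
      intro i _
      push_cast
      rw [show n + 1 + 1 = n + 2 by rfl, hTs i]
    rw [hR]
    have split : ∑ i ∈ Finset.range (n + 2), ((g i + g (i + 2)) * Real.tan x ^ (i + 1))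
        = (∑ i ∈ Finset.range (n + 2), g i * Real.tan x ^ (i + 1))
          + ∑ i ∈ Finset.range (n + 2), g (i + 2) * Real.tan x ^ (i + 1) := by
      rw [← Finset.sum_add_distrib]
      apply Finset.sum_congr rfl
      intro i _
      ring
    have hA : ∑ i ∈ Finset.range (n + 2), g i * Real.tan x ^ (i + 1)
        = ∑ i ∈ Finset.range (n + 1), g (i + 1) * Real.tan x ^ (i + 2) := by
      rw [Finset.sum_range_succ']
      simp [hg, T_zero n]
    have hB : ∑ i ∈ Finset.range (n + 2), g (i + 2) * Real.tan x ^ (i + 1)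
        = ∑ i ∈ Finset.range n, g (i + 2) * Real.tan x ^ (i + 1) := by
      rw [Finset.sum_range_succ, Finset.sum_range_succ]
      have z1 : g (n + 2) = 0 := T_vanish (by omega)
      have z2 : g (n + 1 + 2) = 0 := T_vanish (by omega)
      rw [z1, z2]
      ring
    have hL : ∑ i ∈ Finset.range (n + 1),
          (g (i + 1) * Real.tan x ^ i + g (i + 1) * Real.tan x ^ (i + 2))
        = (g 1 + ∑ i ∈ Finset.range n, g (i + 2) * Real.tan x ^ (i + 1))
          + ∑ i ∈ Finset.range (n + 1), g (i + 1) * Real.tan x ^ (i + 2) := by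
      rw [Finset.sum_add_distrib, Finset.sum_range_succ' (fun i => g (i + 1) * Real.tan x ^ i)]
      simp only [pow_zero, mul_one]
      ring
    rw [hL, split, hA, hB, hg]
    ring

end TanAux

theorem deriv_tan_closed (n : ℕ) (x : ℝ) (hx : Real.cos x ≠ 0) :
    iteratedDeriv n Real.tan x
      = T n 1 + ∑ k ∈ Finset.Icc 1 (n + 1),
          (1 / (k : ℝ)) * T (n + 1) k * Real.tan x ^ k := by
  exact TanAux.main n x hx
end

section
/- For every nonnegative integer n and real x with cos x ≠ 0, the n-th derivative of sec at x equals sec(x) · Σ_{k=0}^{n} S(n,k) tan^k(x). -/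
open Polynomial

noncomputable def LL : ℝ[X] →ₗ[ℝ] ℝ[X] where
  toFun p := (1 + X ^ 2) * derivative p + X * p
  map_add' p q := by simp [mul_add]; ring
  map_smul' c p := by simp [Polynomial.smul_eq_C_mul]; ring

lemma coeff_LL (q : ℝ[X]) (k : ℕ) :
    (LL q).coeff k = k * q.coeff (k - 1) + (k + 1) * q.coeff (k + 1) := by
  have hd : ∀ m : ℕ, (derivative q).coeff m = (m + 1) * q.coeff (m + 1) := by
    intro m; rw [coeff_derivative]; push_cast; ring
  match k with
  | 0 =>
    simp [LL, add_mul, coeff_add, mul_coeff_zero, hd]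
  | 1 =>
    simp [LL, add_mul, coeff_add, coeff_X_mul, hd, pow_two,
      mul_assoc, mul_coeff_zero]
    ring
  | (m + 2) =>
    have h2 : ((X ^ 2 * derivative q : ℝ[X])).coeff (m + 2) = (derivative q).coeff m := by
      simpa using coeff_X_pow_mul (derivative q) 2 m
    simp only [LL, LinearMap.coe_mk, AddHom.coe_mk, add_mul, one_mul, coeff_add, h2,
      coeff_X_mul, hd]
    push_cast
    ring

lemma LL_X_pow (k : ℕ) :
    LL (X ^ k : ℝ[X]) = (k : ℝ) • X ^ (k - 1) + ((k : ℝ) + 1) • X ^ (k + 1) := by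
  match k with
  | 0 => simp [LL]
  | (m + 1) =>
    simp only [LL, LinearMap.coe_mk, AddHom.coe_mk, derivative_X_pow,
      Polynomial.smul_eq_C_mul]
    push_cast
    simp only [C_add, C_1, map_ofNat]
    ring

lemma LL_symm (n : ℕ) : ∀ j k : ℕ,
    ((LL ^ n) (X ^ k : ℝ[X])).coeff j = ((LL ^ n) (X ^ j : ℝ[X])).coeff k := by
  induction n with
  | zero =>
    intro j k
    simp only [pow_zero, Module.End.one_apply, coeff_X_pow]
    by_cases h : j = k <;> simp [h, Ne.symm, eq_comm]
  | succ n ih =>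
    intro j k
    have h1 : ((LL ^ (n + 1)) (X ^ k : ℝ[X])) = (LL ^ n) (LL (X ^ k)) := by
      rw [pow_succ, Module.End.mul_apply]
    have h2 : ((LL ^ (n + 1)) (X ^ j : ℝ[X])) = LL ((LL ^ n) (X ^ j)) := by
      rw [pow_succ', Module.End.mul_apply]
    rw [h1, LL_X_pow, map_add, map_smul, map_smul, h2, coeff_LL]
    simp only [coeff_add, coeff_smul, smul_eq_mul]
    rw [ih j (k - 1), ih j (k + 1)]

lemma hasDerivAt_F_s17 (p : ℝ[X]) (x : ℝ) (hx : Real.cos x ≠ 0) :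
    HasDerivAt (fun y : ℝ => (1 / Real.cos y) * p.eval (Real.tan y))
      ((1 / Real.cos x) * (LL p).eval (Real.tan x)) x := by
  have h1 : HasDerivAt (fun y : ℝ => 1 / Real.cos y)
      (Real.sin x / Real.cos x ^ 2) x := by
    have h := (hasDerivAt_const x (1 : ℝ)).div (Real.hasDerivAt_cos x) hx
    change HasDerivAt (fun y => 1 / Real.cos y) _ x at h
    convert h using 1
    field_simp
    ring
  have h2 : HasDerivAt (fun y : ℝ => p.eval (Real.tan y))
      (p.derivative.eval (Real.tan x) * (1 / Real.cos x ^ 2)) x :=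
    (p.hasDerivAt (Real.tan x)).comp x (Real.hasDerivAt_tan hx)
  have h := h1.mul h2
  change HasDerivAt (fun y => 1 / Real.cos y * p.eval (Real.tan y)) _ x at h
  convert h using 1
  have ht : 1 + Real.tan x ^ 2 = 1 / Real.cos x ^ 2 := by
    rw [one_div, ← Real.inv_one_add_tan_sq hx, inv_inv]
  simp only [LL, LinearMap.coe_mk, AddHom.coe_mk, eval_add, eval_mul, eval_pow,
    eval_X, eval_one, ht]
  rw [Real.tan_eq_sin_div_cos]
  field_simp
  ring

lemma iteratedDeriv_F (n : ℕ) : ∀ (p : ℝ[X]) (x : ℝ), Real.cos x ≠ 0 →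
    iteratedDeriv n (fun y : ℝ => (1 / Real.cos y) * p.eval (Real.tan y)) x
      = (1 / Real.cos x) * ((LL ^ n) p).eval (Real.tan x) := by
  induction n with
  | zero => intro p x hx; simp
  | succ n ih =>
    intro p x hx
    rw [iteratedDeriv_succ']
    have hU : IsOpen {y : ℝ | Real.cos y ≠ 0} :=
      isOpen_compl_singleton.preimage Real.continuous_cos
    have hev : deriv (fun y : ℝ => (1 / Real.cos y) * p.eval (Real.tan y))
        =ᶠ[nhds x] (fun y : ℝ => (1 / Real.cos y) * (LL p).eval (Real.tan y)) := by
      filter_upwards [hU.mem_nhds hx] with y hy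
      exact (hasDerivAt_F_s17 p y hy).deriv
    rw [hev.iteratedDeriv_eq n, ih (LL p) x hx, pow_succ, Module.End.mul_apply]

lemma natDegree_LL_pow_one (n : ℕ) : ((LL ^ n) (1 : ℝ[X])).natDegree ≤ n := by
  induction n with
  | zero => simp
  | succ n ih =>
    rw [pow_succ', Module.End.mul_apply]
    set q := (LL ^ n) (1 : ℝ[X])
    have hA : (1 + X ^ 2 : ℝ[X]).natDegree = 2 := by
      rw [add_comm]
      simpa using natDegree_X_pow_add_C (n := 2) (r := (1 : ℝ))
    have h1 : ((1 + X ^ 2 : ℝ[X]) * derivative q).natDegree ≤ n + 1 := by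
      by_cases hq : derivative q = 0
      · simp [hq]
      · have hB : (derivative q).natDegree ≤ q.natDegree - 1 := natDegree_derivative_le q
        have hq1 : 1 ≤ q.natDegree := by
          by_contra h
          push_neg at h
          have h0 : q.natDegree = 0 := by omega
          exact hq (by rw [Polynomial.eq_C_of_natDegree_eq_zero h0, derivative_C])
        have hm := natDegree_mul_le (p := (1 + X ^ 2 : ℝ[X])) (q := derivative q)
        rw [hA] at hm
        omega
    have h2 : ((X : ℝ[X]) * q).natDegree ≤ n + 1 := by
      have hm := natDegree_mul_le (p := (X : ℝ[X])) (q := q)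
      rw [natDegree_X] at hm
      omega
    show ((1 + X ^ 2 : ℝ[X]) * derivative q + X * q).natDegree ≤ n + 1
    exact (natDegree_add_le _ _).trans (max_le h1 h2)

theorem deriv_sec_closed (n : ℕ) (x : ℝ) (hx : Real.cos x ≠ 0) :
    iteratedDeriv n (fun y : ℝ => 1 / Real.cos y) x
      = (1 / Real.cos x) * ∑ k ∈ Finset.range (n + 1), S n k * Real.tan x ^ k := by
  have h1 : (fun y : ℝ => 1 / Real.cos y)
      = (fun y : ℝ => (1 / Real.cos y) * (1 : ℝ[X]).eval (Real.tan y)) := by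
    funext y; simp
  rw [h1, iteratedDeriv_F n 1 x hx]
  congr 1
  rw [eval_eq_sum_range' (Nat.lt_succ_of_le (natDegree_LL_pow_one n)) (Real.tan x)]
  refine Finset.sum_congr rfl fun k _ => ?_
  congr 1
  have hS : S n k = (1 / Real.cos 0) * ((LL ^ n) (X ^ k : ℝ[X])).eval (Real.tan 0) := by
    rw [S]
    have h2 : (fun t : ℝ => (1 / Real.cos t) * Real.tan t ^ k)
        = (fun t : ℝ => (1 / Real.cos t) * (X ^ k : ℝ[X]).eval (Real.tan t)) := by
      funext t; simp
    rw [h2, iteratedDeriv_F n (X ^ k) 0 (by simp)]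
  rw [hS]
  simp only [Real.cos_zero, Real.tan_zero, div_one, one_mul]
  rw [← coeff_zero_eq_eval_zero, LL_symm n 0 k]
  simp
end

section
/- For every nonnegative integer n and real x with sin x ≠ 0, the n-th derivative of cot at x equals (-1)^n [T(n,1) + Σ_{k=1}^{n+1} (1/k) T(n+1,k) cot^k(x)]. -/
open Real Topology

lemma iteratedDeriv_zero_fun (n : ℕ) : iteratedDeriv n (fun _ : ℝ => (0:ℝ)) = fun _ => 0 := by
  induction n with
  | zero => simp
  | succ n ih => rw [iteratedDeriv_succ']; simpa using ih

lemma T_zero_right (m : ℕ) (hm : m ≠ 0) : T m 0 = 0 := by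
  obtain ⟨m, rfl⟩ := Nat.exists_eq_succ_of_ne_zero hm
  have h1 : (fun t : ℝ => Real.tan t ^ 0) = fun _ : ℝ => (1:ℝ) := by
    funext t; exact pow_zero _
  rw [T, h1, iteratedDeriv_succ']
  have : deriv (fun _ : ℝ => (1:ℝ)) = fun _ : ℝ => (0:ℝ) := by
    funext t; exact deriv_const t 1
  rw [this, iteratedDeriv_zero_fun]

lemma cos_open : IsOpen {t : ℝ | Real.cos t ≠ 0} :=
  isOpen_compl_singleton.preimage Real.continuous_cos

lemma iteratedDeriv_of_isOpen {f : ℝ → ℝ} {s : Set ℝ} (hs : IsOpen s) {x : ℝ}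
    (hx : x ∈ s) (n : ℕ) : iteratedDerivWithin n f s x = iteratedDeriv n f x := by
  rw [iteratedDerivWithin, iteratedDeriv, iteratedFDerivWithin_of_isOpen n hs hx]

lemma tan_contDiffOn (k : ℕ) (m : ℕ) :
    ContDiffOn ℝ m (fun t : ℝ => Real.tan t ^ k) {t : ℝ | Real.cos t ≠ 0} := fun t ht =>
  ((Real.contDiffAt_tan.2 ht).pow k).contDiffWithinAt

lemma T_succ (m i : ℕ) : T (m + 1) (i + 1) = (i + 1) * (T m i + T m (i + 2)) := by
  have h0 : (0:ℝ) ∈ {t : ℝ | Real.cos t ≠ 0} := by simp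
  have hU : UniqueDiffOn ℝ {t : ℝ | Real.cos t ≠ 0} := cos_open.uniqueDiffOn
  have hev : deriv (fun t : ℝ => Real.tan t ^ (i + 1))
      =ᶠ[𝓝 (0:ℝ)] fun t => ((i:ℝ) + 1) * (Real.tan t ^ i + Real.tan t ^ (i + 2)) := by
    filter_upwards [cos_open.mem_nhds h0] with t ht
    have h1 := ((Real.hasDerivAt_tan ht).pow (i + 1)).deriv
    simp only [Nat.add_sub_cancel] at h1
    rw [show (fun t : ℝ => Real.tan t ^ (i + 1)) = Real.tan ^ (i + 1) from rfl, h1]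
    have h2 : 1 / Real.cos t ^ 2 = 1 + Real.tan t ^ 2 := by
      rw [Real.tan_eq_sin_div_cos]
      field_simp
      linarith [Real.sin_sq_add_cos_sq t]
    rw [h2]; push_cast; ring
  have key : iteratedDeriv m
      (fun t => ((i:ℝ) + 1) * (Real.tan t ^ i + Real.tan t ^ (i + 2))) 0
      = ((i:ℝ) + 1) * (T m i + T m (i + 2)) := by
    have hpi : (fun x : ℝ => Real.tan x ^ i + Real.tan x ^ (i + 2))
        = (fun t : ℝ => Real.tan t ^ i) + fun t => Real.tan t ^ (i + 2) := rfl
    rw [← iteratedDeriv_of_isOpen cos_open h0,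
      iteratedDerivWithin_const_mul h0 hU ((i:ℝ)+1)
        (((tan_contDiffOn i m).add (tan_contDiffOn (i+2) m)) 0 h0),
      hpi, iteratedDerivWithin_add h0 hU (tan_contDiffOn i m 0 h0) (tan_contDiffOn (i+2) m 0 h0),
      iteratedDeriv_of_isOpen cos_open h0, iteratedDeriv_of_isOpen cos_open h0]
    rfl
  rw [T, iteratedDeriv_succ', hev.iteratedDeriv_eq m, key]

lemma T_vanish : ∀ m k : ℕ, m < k → T m k = 0 := by
  intro m
  induction m with
  | zero =>
    intro k hk
    simp [T, Real.tan_zero, zero_pow (by omega : k ≠ 0)]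
  | succ m ih =>
    intro k hk
    obtain ⟨i, rfl⟩ : ∃ i, k = i + 1 := ⟨k - 1, by omega⟩
    rw [T_succ, ih i (by omega), ih (i + 2) (by omega)]
    ring

lemma sum_Icc_eq_range (m : ℕ) (f : ℕ → ℝ) :
    ∑ k ∈ Finset.Icc 1 m, f k = ∑ i ∈ Finset.range m, f (i + 1) := by
  rw [← Finset.Ico_add_one_right_eq_Icc, Finset.sum_Ico_eq_sum_range]
  simp [add_comm]

lemma sum_shift (n : ℕ) (a : ℕ → ℝ) (c : ℝ) (h0 : a 0 = 0) (h1 : a (n + 2) = 0)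
    (h2 : a (n + 3) = 0) :
    ∑ i ∈ Finset.range (n + 1), a (i + 1) * (c ^ i + c ^ (i + 2))
      = a 1 + ∑ i ∈ Finset.range (n + 2), (a i + a (i + 2)) * c ^ (i + 1) := by
  have e1 : ∑ i ∈ Finset.range (n + 2), a i * c ^ (i + 1)
      = ∑ i ∈ Finset.range (n + 1), a (i + 1) * c ^ (i + 2) := by
    rw [Finset.sum_range_succ']; simp [h0]
  have e2 : ∑ i ∈ Finset.range (n + 2), a (i + 2) * c ^ (i + 1)
      = ∑ i ∈ Finset.range n, a (i + 2) * c ^ (i + 1) := by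
    rw [Finset.sum_range_succ, Finset.sum_range_succ]
    simp [h1, h2]
  have e3 : ∑ i ∈ Finset.range (n + 1), a (i + 1) * c ^ i
      = a 1 + ∑ i ∈ Finset.range n, a (i + 2) * c ^ (i + 1) := by
    rw [Finset.sum_range_succ']
    simp only [pow_zero, mul_one]
    rw [add_comm]
  calc ∑ i ∈ Finset.range (n + 1), a (i + 1) * (c ^ i + c ^ (i + 2))
      = ∑ i ∈ Finset.range (n + 1), a (i + 1) * c ^ i
        + ∑ i ∈ Finset.range (n + 1), a (i + 1) * c ^ (i + 2) := by
        rw [← Finset.sum_add_distrib]; exact Finset.sum_congr rfl fun i _ => by ring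
    _ = a 1 + ∑ i ∈ Finset.range (n + 2), (a i + a (i + 2)) * c ^ (i + 1) := by
        have : ∑ i ∈ Finset.range (n + 2), (a i + a (i + 2)) * c ^ (i + 1)
            = ∑ i ∈ Finset.range (n + 2), a i * c ^ (i + 1)
              + ∑ i ∈ Finset.range (n + 2), a (i + 2) * c ^ (i + 1) := by
          rw [← Finset.sum_add_distrib]; exact Finset.sum_congr rfl fun i _ => by ring
        rw [this, e1, e2, e3]; ring

theorem deriv_cot_closed (n : ℕ) (x : ℝ) (hx : Real.sin x ≠ 0) :
    iteratedDeriv n (fun y : ℝ => Real.cos y / Real.sin y) x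
      = (-1 : ℝ) ^ n * (T n 1 + ∑ k ∈ Finset.Icc 1 (n + 1),
          (1 / (k : ℝ)) * T (n + 1) k * (Real.cos x / Real.sin x) ^ k) := by
  induction n generalizing x with
  | zero =>
    have hT01 : T 0 1 = 0 := by simp [T]
    have hT11 : T 1 1 = 1 := by
      have h1 : (fun t : ℝ => Real.tan t ^ 1) = Real.tan := by funext t; exact pow_one _
      rw [T, h1, iteratedDeriv_one, Real.deriv_tan]
      norm_num
    simp [hT01, hT11]
  | succ n ih =>
    have hopen : IsOpen {y : ℝ | Real.sin y ≠ 0} :=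
      isOpen_compl_singleton.preimage Real.continuous_sin
    have hxset : x ∈ {y : ℝ | Real.sin y ≠ 0} := hx
    have hev : iteratedDeriv n (fun y : ℝ => Real.cos y / Real.sin y)
        =ᶠ[𝓝 x] fun y => (-1:ℝ)^n * (T n 1 + ∑ k ∈ Finset.Icc 1 (n+1),
          (1/(k:ℝ)) * T (n+1) k * (Real.cos y / Real.sin y)^k) := by
      filter_upwards [hopen.mem_nhds hxset] with y hy
      exact ih y hy
    rw [iteratedDeriv_succ, hev.deriv_eq]
    have hCd : HasDerivAt (fun y : ℝ => Real.cos y / Real.sin y)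
        (-(1 + (Real.cos x / Real.sin x)^2)) x := by
      have h := (Real.hasDerivAt_cos x).fun_div (Real.hasDerivAt_sin x) hx
      refine h.congr_deriv ?_
      have hs := Real.sin_sq_add_cos_sq x
      field_simp
      nlinarith [hs]
    have hterm : ∀ k ∈ Finset.Icc 1 (n+1), HasDerivAt
        (fun y => (1/(k:ℝ)) * T (n+1) k * (Real.cos y / Real.sin y)^k)
        ((1/(k:ℝ)) * T (n+1) k * ((k:ℝ) * (Real.cos x / Real.sin x)^(k-1)
          * (-(1 + (Real.cos x / Real.sin x)^2)))) x :=
      fun k _ => (hCd.pow k).const_mul _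
    have hall := ((HasDerivAt.fun_sum hterm).const_add (T n 1)).const_mul ((-1:ℝ)^n)
    rw [hall.deriv]
    set c := Real.cos x / Real.sin x with hc
    rw [sum_Icc_eq_range, sum_Icc_eq_range]
    have hL : ∀ i ∈ Finset.range (n+1),
        (1/((i+1:ℕ):ℝ)) * T (n+1) (i+1) * (((i+1:ℕ):ℝ) * c^((i+1)-1) * (-(1 + c^2)))
          = -(T (n+1) (i+1) * (c^i + c^(i+2))) := by
      intro i _
      have hk : ((i:ℝ)+1) ≠ 0 := by positivity
      simp only [Nat.add_sub_cancel]
      push_cast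
      field_simp
      ring
    have hR : ∀ i ∈ Finset.range (n+2),
        (1/((i+1:ℕ):ℝ)) * T (n+2) (i+1) * c^(i+1)
          = (T (n+1) i + T (n+1) (i+2)) * c^(i+1) := by
      intro i _
      have hk : ((i:ℝ)+1) ≠ 0 := by positivity
      rw [show n + 2 = (n + 1) + 1 from rfl, T_succ]
      push_cast
      field_simp
    rw [Finset.sum_congr rfl hL, Finset.sum_congr rfl hR]
    have key := sum_shift n (fun k => T (n+1) k) c (T_zero_right (n+1) n.succ_ne_zero)
      (T_vanish (n+1) (n+2) (by omega)) (T_vanish (n+1) (n+3) (by omega))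
    rw [Finset.sum_neg_distrib, key, pow_succ]
    ring
end

section
/- For every nonnegative integer n and every real x, the n-th derivative of tanh at x equals (-1)^{(n-1)/2} T(n,1) + Σ_{k=1}^{n+1} ((-1)^{(n+k-1)/2} / k) T(n+1,k) tanh^k(x), where in each term the sign factor is interpreted via the convention that T(m,j) = 0 when m + j is odd (so all surviving terms have integer exponents of -1). -/
open Real Set Filter Topology

namespace TanhClosed

lemma tanh_hasDerivAt (x : ℝ) : HasDerivAt Real.tanh (1 - Real.tanh x ^ 2) x := by
  have hc : Real.cosh x ≠ 0 := (Real.cosh_pos x).ne'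
  have h := (Real.hasDerivAt_sinh x).div (Real.hasDerivAt_cosh x) hc
  have heq : (Real.sinh / Real.cosh) = Real.tanh := by
    funext y; rw [Pi.div_apply, Real.tanh_eq_sinh_div_cosh]
  rw [heq] at h
  refine h.congr_deriv ?_
  rw [Real.tanh_eq_sinh_div_cosh]
  field_simp

lemma zero_mem : (0 : ℝ) ∈ Ioo (-(π/2)) (π/2) := by
  constructor <;> simp [Real.pi_pos, Real.pi_div_two_pos]

lemma cos_ne_of_mem {t : ℝ} (ht : t ∈ Ioo (-(π/2)) (π/2)) : Real.cos t ≠ 0 :=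
  (Real.cos_pos_of_mem_Ioo ht).ne'

lemma contDiffOn_tan_pow (n k : ℕ) :
    ContDiffOn ℝ n (fun t : ℝ => Real.tan t ^ k) (Ioo (-(π/2)) (π/2)) :=
  fun _ ht => ((Real.contDiffAt_tan.2 (cos_ne_of_mem ht)).pow k).contDiffWithinAt

lemma iteratedDeriv_eq_within {f : ℝ → ℝ} {s : Set ℝ} (hs : IsOpen s) {x : ℝ}
    (hx : x ∈ s) (n : ℕ) : iteratedDeriv n f x = iteratedDerivWithin n f s x := by
  rw [iteratedDerivWithin_eq_iteratedFDerivWithin, iteratedDeriv_eq_iteratedFDeriv,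
    iteratedFDerivWithin_of_isOpen n hs hx]

lemma T_rec (n k : ℕ) (hk : 1 ≤ k) :
    T (n+1) k = k * T n (k-1) + k * T n (k+1) := by
  have hs : IsOpen (Ioo (-(π/2):ℝ) (π/2)) := isOpen_Ioo
  have h0 : (0:ℝ) ∈ Ioo (-(π/2)) (π/2) := zero_mem
  have hu : UniqueDiffOn ℝ (Ioo (-(π/2):ℝ) (π/2)) := hs.uniqueDiffOn
  have hev : deriv (fun t : ℝ => Real.tan t ^ k)
      =ᶠ[𝓝 (0:ℝ)] (fun t => (k:ℝ) * Real.tan t ^ (k-1) + (k:ℝ) * Real.tan t ^ (k+1)) := by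
    filter_upwards [hs.mem_nhds h0] with t ht
    have hc := cos_ne_of_mem ht
    have h1 : HasDerivAt (fun t : ℝ => Real.tan t ^ k)
        ((k:ℝ) * Real.tan t ^ (k-1) * (1 / Real.cos t ^ 2)) t :=
      (Real.hasDerivAt_tan hc).pow k
    rw [h1.deriv]
    have h2 : (1:ℝ) / Real.cos t ^ 2 = 1 + Real.tan t ^ 2 := by
      rw [one_div, ← Real.inv_one_add_tan_sq hc, inv_inv]
    rw [h2, mul_add, mul_one]
    congr 1
    rw [mul_assoc, ← pow_add]
    congr 2
    omega
  have hsplit : (fun t : ℝ => (k:ℝ) * Real.tan t ^ (k-1) + (k:ℝ) * Real.tan t ^ (k+1))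
      = (fun t : ℝ => (k:ℝ) * Real.tan t ^ (k-1)) + (fun t => (k:ℝ) * Real.tan t ^ (k+1)) :=
    rfl
  calc T (n+1) k = iteratedDeriv n (deriv (fun t : ℝ => Real.tan t ^ k)) 0 := by
        rw [T, iteratedDeriv_succ']
    _ = iteratedDeriv n
          (fun t => (k:ℝ) * Real.tan t ^ (k-1) + (k:ℝ) * Real.tan t ^ (k+1)) 0 :=
        hev.iteratedDeriv_eq n
    _ = k * T n (k-1) + k * T n (k+1) := by
        rw [iteratedDeriv_eq_within hs h0, hsplit,
          iteratedDerivWithin_add h0 hu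
            ((contDiffOn_const.mul (contDiffOn_tan_pow n (k-1))).contDiffWithinAt h0)
            ((contDiffOn_const.mul (contDiffOn_tan_pow n (k+1))).contDiffWithinAt h0),
          iteratedDerivWithin_const_mul h0 hu _ ((contDiffOn_tan_pow n (k-1)).contDiffWithinAt h0),
          iteratedDerivWithin_const_mul h0 hu _ ((contDiffOn_tan_pow n (k+1)).contDiffWithinAt h0),
          ← iteratedDeriv_eq_within hs h0, ← iteratedDeriv_eq_within hs h0]
        rfl

lemma itd_const (c : ℝ) : ∀ n, iteratedDeriv (n+1) (fun _ : ℝ => c) = fun _ => (0:ℝ)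
  | 0 => by rw [iteratedDeriv_one]; exact deriv_const' c
  | n+1 => by rw [iteratedDeriv_succ', deriv_const']; exact itd_const 0 n

lemma T_zero_right (n : ℕ) (hn : 1 ≤ n) : T n 0 = 0 := by
  obtain ⟨m, rfl⟩ : ∃ m, n = m + 1 := ⟨n - 1, by omega⟩
  have : (fun t : ℝ => Real.tan t ^ 0) = fun _ : ℝ => (1:ℝ) := by funext t; simp
  rw [T, this, itd_const 1 m]

lemma T_eq_zero_of_lt : ∀ n k : ℕ, n < k → T n k = 0 := by
  intro n
  induction n with
  | zero =>
    intro k hk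
    rw [T, iteratedDeriv_zero]
    simp [Real.tan_zero, zero_pow (by omega : k ≠ 0)]
  | succ n ih =>
    intro k hk
    rw [T_rec n k (by omega), ih (k-1) (by omega), ih (k+1) (by omega)]
    ring

lemma T_one_one : T 1 1 = 1 := by
  have h : (fun t : ℝ => Real.tan t ^ 1) = Real.tan := by funext t; simp
  rw [T, h, iteratedDeriv_one, Real.deriv_tan, Real.cos_zero]
  norm_num

noncomputable def A (n k : ℕ) : ℝ :=
  if k = 0 then (-1:ℝ) ^ ((n-1)/2) * T n 1
  else (-1:ℝ) ^ ((n+k-1)/2) / k * T (n+1) k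

lemma A_vanish (n k : ℕ) (hk : n + 2 ≤ k) : A n k = 0 := by
  rw [A, if_neg (by omega), T_eq_zero_of_lt (n+1) k (by omega), mul_zero]

lemma A_rec (n j : ℕ) :
    A (n+1) j = ((j:ℝ)+1) * A n (j+1) - ((j-1 : ℕ) : ℝ) * A n (j-1) := by
  rcases Nat.lt_or_ge j 2 with hj | hj
  · interval_cases j
    · simp [A]
    · have h1 : T (n+1+1) 1 = T (n+1) 2 := by
        rw [T_rec (n+1) 1 le_rfl, T_zero_right (n+1) (by omega)]
        push_cast; ring
      simp only [A, if_neg (by omega : (1:ℕ) ≠ 0), if_neg (by omega : (2:ℕ) ≠ 0)]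
      norm_num
      rw [h1]
      ring
  · have hj0 : j ≠ 0 := by omega
    have hj1 : j + 1 ≠ 0 := by omega
    have hjm : j - 1 ≠ 0 := by omega
    rw [A, A, A, if_neg hj0, if_neg hj1, if_neg hjm]
    have e1 : (n+1+j-1)/2 = (n+j)/2 := by omega
    have e2 : (n+(j+1)-1)/2 = (n+j)/2 := by omega
    have e3 : (n+j)/2 = (n+(j-1)-1)/2 + 1 := by omega
    rw [e1, e2, T_rec (n+1) j (by omega)]
    rw [e3, pow_succ]
    have hjr : (j:ℝ) ≠ 0 := Nat.cast_ne_zero.2 hj0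
    have hjr1 : (j:ℝ) + 1 ≠ 0 := by positivity
    have hcast : ((j-1:ℕ):ℝ) = (j:ℝ) - 1 := by
      push_cast [Nat.cast_sub (by omega : 1 ≤ j)]; ring
    have hjmr : (j:ℝ) - 1 ≠ 0 := by
      rw [← hcast]; exact Nat.cast_ne_zero.2 hjm
    rw [hcast]
    field_simp
    push_cast
    ring
  
lemma sum_identity (n : ℕ) (u : ℝ) :
    ∑ k ∈ Finset.range (n+2), A n k * ((k:ℝ) * u ^ (k-1) * (1 - u^2))
      = ∑ j ∈ Finset.range (n+3), A (n+1) j * u ^ j := by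
  have hL : ∑ k ∈ Finset.range (n+2), A n k * ((k:ℝ) * u ^ (k-1) * (1 - u^2))
      = ∑ k ∈ Finset.range (n+4), A n k * ((k:ℝ) * u ^ (k-1) * (1 - u^2)) := by
    refine Finset.sum_subset (Finset.range_subset_range.2 (by omega : n + 2 ≤ n + 4)) ?_
    intro k _ hk
    simp only [Finset.mem_range, not_lt] at hk
    rw [A_vanish n k (by omega), zero_mul]
  have hR : ∑ j ∈ Finset.range (n+3), A (n+1) j * u ^ j
      = ∑ j ∈ Finset.range (n+4), A (n+1) j * u ^ j := by
    refine Finset.sum_subset (Finset.range_subset_range.2 (by omega : n + 3 ≤ n + 4)) ?_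
    intro j _ hj
    simp only [Finset.mem_range, not_lt] at hj
    rw [A_vanish (n+1) j (by omega), zero_mul]
  rw [hL, hR]
  have hterm : ∀ k ∈ Finset.range (n+4),
      A n k * ((k:ℝ) * u ^ (k-1) * (1 - u^2))
        = (k:ℝ) * A n k * u ^ (k-1) - (k:ℝ) * A n k * u ^ (k+1) := by
    intro k _
    rcases Nat.eq_zero_or_pos k with hk | hk
    · subst hk; simp
    · have hpow : u ^ (k-1) * u ^ 2 = u ^ (k+1) := by
        rw [← pow_add]; congr 1; omega
      calc A n k * ((k:ℝ) * u ^ (k-1) * (1 - u^2))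
          = (k:ℝ) * A n k * u ^ (k-1) - (k:ℝ) * A n k * (u ^ (k-1) * u ^ 2) := by ring
        _ = _ := by rw [hpow]
  rw [Finset.sum_congr rfl hterm, Finset.sum_sub_distrib]
  have claim1 : ∑ k ∈ Finset.range (n+4), (k:ℝ) * A n k * u ^ (k-1)
      = ∑ j ∈ Finset.range (n+4), ((j:ℝ)+1) * A n (j+1) * u ^ j := by
    rw [Finset.sum_range_succ' (fun k => (k:ℝ) * A n k * u ^ (k-1)) (n+3),
      Finset.sum_range_succ (fun j => ((j:ℝ)+1) * A n (j+1) * u ^ j) (n+3),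
      A_vanish n (n+3+1) (by omega)]
    simp only [Nat.cast_zero, zero_mul, add_zero, mul_zero, Nat.add_sub_cancel]
    refine Finset.sum_congr rfl fun i _ => ?_
    push_cast
    ring
  have claim2 : ∑ k ∈ Finset.range (n+4), (k:ℝ) * A n k * u ^ (k+1)
      = ∑ j ∈ Finset.range (n+4), ((j-1:ℕ):ℝ) * A n (j-1) * u ^ j := by
    rw [Finset.sum_range_succ (fun k => (k:ℝ) * A n k * u ^ (k+1)) (n+3),
      Finset.sum_range_succ' (fun j => ((j-1:ℕ):ℝ) * A n (j-1) * u ^ j) (n+3),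
      A_vanish n (n+3) (by omega)]
    simp only [Nat.add_sub_cancel, Nat.zero_sub, Nat.cast_zero, zero_mul, add_zero, mul_zero]
  rw [claim1, claim2, ← Finset.sum_sub_distrib]
  refine Finset.sum_congr rfl fun j _ => ?_
  rw [A_rec n j]
  ring

lemma main (n : ℕ) : ∀ x : ℝ, iteratedDeriv n Real.tanh x
    = ∑ k ∈ Finset.range (n+2), A n k * Real.tanh x ^ k := by
  induction n with
  | zero =>
    intro x
    rw [iteratedDeriv_zero]
    rw [Finset.sum_range_succ, Finset.sum_range_succ, Finset.sum_range_zero]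
    have h1 : A 0 0 = 0 := by
      rw [A, if_pos rfl, T_eq_zero_of_lt 0 1 (by omega), mul_zero]
    have h2 : A 0 1 = 1 := by
      rw [A, if_neg (by omega), T_one_one]
      norm_num
    rw [h1, h2]
    ring
  | succ n ih =>
    intro x
    have hF : iteratedDeriv n Real.tanh
        = fun y => ∑ k ∈ Finset.range (n+2), A n k * Real.tanh y ^ k := funext ih
    rw [iteratedDeriv_succ, hF]
    have hd : HasDerivAt (fun y => ∑ k ∈ Finset.range (n+2), A n k * Real.tanh y ^ k)
        (∑ k ∈ Finset.range (n+2),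
          A n k * ((k:ℝ) * Real.tanh x ^ (k-1) * (1 - Real.tanh x ^ 2))) x := by
      apply HasDerivAt.fun_sum
      intro k _
      exact ((tanh_hasDerivAt x).pow k).const_mul (A n k)
    rw [hd.deriv, sum_identity n (Real.tanh x)]

end TanhClosed

theorem deriv_tanh_closed (n : ℕ) (x : ℝ) :
    iteratedDeriv n Real.tanh x
      = (-1 : ℝ) ^ ((n - 1) / 2) * T n 1
        + ∑ k ∈ Finset.Icc 1 (n + 1),
            ((-1 : ℝ) ^ ((n + k - 1) / 2) / (k : ℝ)) * T (n + 1) k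
              * Real.tanh x ^ k := by
  rw [TanhClosed.main n x,
    Finset.sum_range_succ' (fun k => TanhClosed.A n k * Real.tanh x ^ k) (n+1)]
  have hIcc : Finset.Icc 1 (n+1) = Finset.Ico 1 (n+2) := by
    exact (Finset.Ico_add_one_right_eq_Icc 1 (n+1)).symm
  rw [hIcc, Finset.sum_Ico_eq_sum_range, show n+2-1 = n+1 from rfl]
  have h0 : TanhClosed.A n 0 * Real.tanh x ^ 0 = (-1:ℝ)^((n-1)/2) * T n 1 := by
    rw [TanhClosed.A, if_pos rfl, pow_zero, mul_one]
  have hsum : ∀ i ∈ Finset.range (n+1),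
      TanhClosed.A n (i+1) * Real.tanh x ^ (i+1)
        = ((-1:ℝ) ^ ((n + (1+i) - 1) / 2) / ((1+i : ℕ) : ℝ)) * T (n+1) (1+i)
            * Real.tanh x ^ (1+i) := by
    intro i _
    rw [TanhClosed.A, if_neg (by omega), add_comm 1 i]
  rw [Finset.sum_congr rfl hsum, h0, add_comm]
end
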